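/- If K is an infinite compact Hausdorff space, then C(K) does not have the Schur property; in particular there exist a sequence (fₙ) in the unit ball of C(K) and a sequence (ξₙ) in the unit ball of C(K)* such that (fₙ) is weakly null and ξₙ(fₙ) = 1 for all n. -/
import Mathlib


open Filter Topology Metric

/-- A sequence in a normed space is weakly null. -/
def WeaklyNull {E : Type*} [NormedAddCommGroup E] [NormedSpace ℝ E] (x : ℕ → E) : Prop :=
  ∀ φ : E →L[ℝ] ℝ, Tendsto (fun n => φ (x n)) atTop (𝓝 0)

/-- A bounded linear operator is completely continuous: it maps weakly null
sequences to norm null sequences. -/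
def CompletelyContinuous {E F : Type*} [NormedAddCommGroup E] [NormedSpace ℝ E]
    [NormedAddCommGroup F] [NormedSpace ℝ F] (T : E →L[ℝ] F) : Prop :=
  ∀ x : ℕ → E, WeaklyNull x → Tendsto (fun n => ‖T (x n)‖) atTop (𝓝 0)

/-- A bounded linear operator is weakly compact: the image of the closed unit
ball is relatively compact in the weak topology of the codomain. -/
def WeaklyCompactOp {E F : Type*} [NormedAddCommGroup E] [NormedSpace ℝ E]
    [NormedAddCommGroup F] [NormedSpace ℝ F] (T : E →L[ℝ] F) : Prop :=
  IsCompact (closure (toWeakSpace ℝ F '' (T '' closedBall (0 : E) 1)))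

/-- The Dunford–Pettis property: every weakly compact operator into any Banach
space is completely continuous. -/
def DunfordPettis (E : Type) [NormedAddCommGroup E] [NormedSpace ℝ E] : Prop :=
  ∀ (F : Type) [NormedAddCommGroup F] [NormedSpace ℝ F] [CompleteSpace F],
    ∀ T : E →L[ℝ] F, WeaklyCompactOp T → CompletelyContinuous T

/-- The Schur property: weakly null sequences are norm null. -/
def SchurProperty (E : Type*) [NormedAddCommGroup E] [NormedSpace ℝ E] : Prop :=
  ∀ x : ℕ → E, WeaklyNull x → Tendsto (fun n => ‖x n‖) atTop (𝓝 0)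

/-- A topological space is scattered: every nonempty closed subset has a point
isolated in that subset. -/
def Scattered (X : Type*) [TopologicalSpace X] : Prop :=
  ∀ C : Set X, IsClosed C → C.Nonempty → ∃ x ∈ C, 𝓝[C \ {x}] x = ⊥

/-- `X`, together with the bounded bilinear map `tmul`, is (a realization of) the completed
projective tensor product `E ⊗̂ F`, characterized by the universal property for bounded
bilinear maps together with the cross-norm property. -/
structure IsProjectiveTensorProduct (E F X : Type) [NormedAddCommGroup E] [NormedSpace ℝ E]
    [NormedAddCommGroup F] [NormedSpace ℝ F] [NormedAddCommGroup X] [NormedSpace ℝ X]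
    [CompleteSpace X] (tmul : E →L[ℝ] F →L[ℝ] X) : Prop where
  norm_tmul : ∀ f g, ‖tmul f g‖ = ‖f‖ * ‖g‖
  lift : ∀ (G : Type) [NormedAddCommGroup G] [NormedSpace ℝ G] [CompleteSpace G]
    (B : E →L[ℝ] F →L[ℝ] G),
    ∃! T : X →L[ℝ] G, (∀ f g, T (tmul f g) = B f g) ∧ ‖T‖ = ‖B‖

/-- `X`, together with the symmetric bounded bilinear map `tmul`, is (a realization of) the
2-fold symmetric projective tensor product `E ⊗̂ₛ E`, characterized by the universal property
for bounded symmetric bilinear maps. -/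
structure IsSymmetricProjectiveTensorProduct2 (E X : Type) [NormedAddCommGroup E]
    [NormedSpace ℝ E] [NormedAddCommGroup X] [NormedSpace ℝ X] [CompleteSpace X]
    (tmul : E →L[ℝ] E →L[ℝ] X) : Prop where
  symm : ∀ f g, tmul f g = tmul g f
  lift : ∀ (G : Type) [NormedAddCommGroup G] [NormedSpace ℝ G] [CompleteSpace G]
    (B : E →L[ℝ] E →L[ℝ] G), (∀ f g, B f g = B g f) →
    ∃! T : X →L[ℝ] G, ∀ f g, T (tmul f g) = B f g

/-- `X`, together with the bounded multilinear map `tmul`, is (a realization of) the completed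
projective tensor product `E 0 ⊗̂ ⋯ ⊗̂ E (n-1)`, characterized by the universal property for
bounded multilinear maps. -/
structure IsMultiProjectiveTensorProduct {n : ℕ} (E : Fin n → Type)
    [∀ i, NormedAddCommGroup (E i)] [∀ i, NormedSpace ℝ (E i)] (X : Type)
    [NormedAddCommGroup X] [NormedSpace ℝ X] [CompleteSpace X]
    (tmul : ContinuousMultilinearMap ℝ E X) : Prop where
  lift : ∀ (G : Type) [NormedAddCommGroup G] [NormedSpace ℝ G] [CompleteSpace G]
    (B : ContinuousMultilinearMap ℝ E G), ∃! T : X →L[ℝ] G, ∀ m, T (tmul m) = B m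

/-- `X`, together with the symmetric bounded `n`-linear map `tmul`, is (a realization of) the
`n`-fold symmetric projective tensor product `⊗̂_{n,s} E`, characterized by the universal
property for bounded symmetric `n`-linear maps. -/
structure IsSymmetricProjectiveTensorProduct (n : ℕ) (E : Type) [NormedAddCommGroup E]
    [NormedSpace ℝ E] (X : Type) [NormedAddCommGroup X] [NormedSpace ℝ X] [CompleteSpace X]
    (tmul : ContinuousMultilinearMap ℝ (fun _ : Fin n => E) X) : Prop where
  symm : ∀ (σ : Equiv.Perm (Fin n)) m, tmul (fun i => m (σ i)) = tmul m
  lift : ∀ (G : Type) [NormedAddCommGroup G] [NormedSpace ℝ G] [CompleteSpace G]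
    (B : ContinuousMultilinearMap ℝ (fun _ : Fin n => E) G),
    (∀ (σ : Equiv.Perm (Fin n)) m, B (fun i => m (σ i)) = B m) →
    ∃! T : X →L[ℝ] G, ∀ m, T (tmul m) = B m


section NotSchurAux

variable {K : Type} [TopologicalSpace K] [CompactSpace K] [T2Space K]

/-- One step of the construction of pairwise disjoint nonempty open sets. -/
lemma exists_step_disjoint (A W : Set K) (hA : A.Infinite) (hW : IsOpen W) (hAW : A ⊆ W) :
    ∃ (U A' W' : Set K), IsOpen U ∧ U.Nonempty ∧ U ⊆ W ∧ A'.Infinite ∧ IsOpen W' ∧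
      A' ⊆ W' ∧ W' ⊆ W ∧ Disjoint U W' := by
  obtain ⟨a, ha, b, hb, hab⟩ := hA.nontrivial
  obtain ⟨u, v, hu, hv, hau, hbv, huv⟩ := t2_separation hab
  obtain ⟨u₁, hu₁, hau₁, hcu₁⟩ :=
    normal_exists_closure_subset (isClosed_singleton (x := a)) hu (by simpa using hau)
  obtain ⟨v₁, hv₁, hbv₁, hcv₁⟩ :=
    normal_exists_closure_subset (isClosed_singleton (x := b)) hv (by simpa using hbv)
  have hdc : Disjoint (closure u₁) (closure v₁) := huv.mono hcu₁ hcv₁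
  by_cases h : (A \ closure u₁).Infinite
  · refine ⟨W ∩ u₁, A \ closure u₁, W ∩ (closure u₁)ᶜ, hW.inter hu₁,
      ⟨a, hAW ha, hau₁ rfl⟩, Set.inter_subset_left, h,
      hW.inter isClosed_closure.isOpen_compl, fun x hx => ⟨hAW hx.1, hx.2⟩,
      Set.inter_subset_left, ?_⟩
    exact Set.disjoint_of_subset Set.inter_subset_right Set.inter_subset_right
      (disjoint_compl_right.mono_left subset_closure)
  · have h2 : (A ∩ closure u₁).Infinite := by
      have h3 : (A ∩ closure u₁ ∪ A \ closure u₁).Infinite := by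
        rw [Set.inter_union_diff]; exact hA
      rcases Set.infinite_union.mp h3 with h' | h'
      · exact h'
      · exact absurd h' h
    refine ⟨W ∩ v₁, A ∩ closure u₁, W ∩ (closure v₁)ᶜ, hW.inter hv₁,
      ⟨b, hAW hb, hbv₁ rfl⟩, Set.inter_subset_left, h2,
      hW.inter isClosed_closure.isOpen_compl, fun x hx => ⟨hAW hx.1, ?_⟩,
      Set.inter_subset_left, ?_⟩
    · exact fun hxv => (hdc.le_bot ⟨hx.2, hxv⟩)
    · exact Set.disjoint_of_subset Set.inter_subset_right Set.inter_subset_right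
        (disjoint_compl_right.mono_left subset_closure)

/-- An infinite compact Hausdorff space contains a sequence of pairwise disjoint
nonempty open sets. -/
lemma exists_disjoint_opens [Infinite K] :
    ∃ (U : ℕ → Set K) (x : ℕ → K), (∀ n, IsOpen (U n)) ∧ (∀ n, x n ∈ U n) ∧
      ∀ m n, m ≠ n → Disjoint (U m) (U n) := by
  let S := {p : Set K × Set K // p.1.Infinite ∧ IsOpen p.2 ∧ p.1 ⊆ p.2}
  have step : ∀ s : S, ∃ (U : Set K) (s' : S), IsOpen U ∧ U.Nonempty ∧ U ⊆ s.1.2 ∧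
      s'.1.2 ⊆ s.1.2 ∧ Disjoint U s'.1.2 := by
    rintro ⟨⟨A, W⟩, hA, hW, hAW⟩
    obtain ⟨U, A', W', hUo, hUne, hUW, hA', hW'o, hA'W', hW'W, hdis⟩ :=
      exists_step_disjoint A W hA hW hAW
    exact ⟨U, ⟨(A', W'), hA', hW'o, hA'W'⟩, hUo, hUne, hUW, hW'W, hdis⟩
  choose nextU nextS hopen hne hUW hWW hdisj using step
  let s : ℕ → S := fun n => Nat.rec
    ⟨(Set.univ, Set.univ), Set.infinite_univ, isOpen_univ, subset_rfl⟩
    (fun _ ih => nextS ih) n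
  have hs_succ : ∀ n, s (n + 1) = nextS (s n) := fun n => rfl
  let U : ℕ → Set K := fun n => nextU (s n)
  have mono : ∀ n k, (s (n + k)).1.2 ⊆ (s n).1.2 := by
    intro n k
    induction k with
    | zero => exact subset_rfl
    | succ k ih => exact (hWW (s (n + k))).trans ih
  have key : ∀ m n, m < n → Disjoint (U m) (U n) := by
    intro m n hmn
    have h1 : U n ⊆ (s (m + 1)).1.2 := by
      obtain ⟨k, rfl⟩ := Nat.exists_eq_add_of_le hmn
      exact (hUW (s (m + 1 + k))).trans (mono (m + 1) k)
    exact ((hdisj (s m)).mono_right h1)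
  choose x hx using fun n => hne (s n)
  exact ⟨U, x, fun n => hopen (s n), hx, fun m n hmn => by
    rcases lt_or_gt_of_ne hmn with h | h
    · exact key m n h
    · exact (key n m h).symm⟩

end NotSchurAux

/-- for infinite compact Hausdorff `K`, `C(K)` is not Schur; in particular
there are a weakly null sequence in the unit ball of `C(K)` and a sequence in the unit ball
of `C(K)*` with `ξₙ(fₙ) = 1` for all `n`. -/
theorem not_schur_continuousMap (K : Type) [TopologicalSpace K] [CompactSpace K] [T2Space K]
    [Infinite K] :
    ¬ SchurProperty C(K, ℝ) ∧
      ∃ (f : ℕ → C(K, ℝ)) (ξ : ℕ → (C(K, ℝ) →L[ℝ] ℝ)),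
        (∀ n, ‖f n‖ ≤ 1) ∧ (∀ n, ‖ξ n‖ ≤ 1) ∧ WeaklyNull f ∧ ∀ n, ξ n (f n) = 1 := by
  obtain ⟨U, x, hUo, hxU, hdis⟩ := exists_disjoint_opens (K := K)
  choose f hf0 hf1 hf01 using fun n =>
    exists_continuous_zero_one_of_isClosed (hUo n).isClosed_compl
      (isClosed_singleton (x := x n))
      (by simp [Set.disjoint_singleton_right, hxU n])
  have hfnorm : ∀ n, ‖f n‖ ≤ 1 := by
    intro n
    rw [ContinuousMap.norm_le _ zero_le_one]
    intro y
    have := hf01 n y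
    rw [Real.norm_eq_abs, abs_le]
    exact ⟨by linarith [this.1], this.2⟩
  have hfx : ∀ n, f n (x n) = 1 := fun n => hf1 n rfl
  have hsupp : ∀ n y, y ∉ U n → f n y = 0 := fun n y hy => hf0 n hy
  have hptsum : ∀ (t : Finset ℕ) (y : K), ∑ i ∈ t, |f i y| ≤ 1 := by
    intro t y
    by_cases hex : ∃ m ∈ t, y ∈ U m
    · obtain ⟨m, hm, hym⟩ := hex
      have : ∑ i ∈ t, |f i y| = |f m y| := by
        refine Finset.sum_eq_single_of_mem m hm ?_
        intro j _ hjm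
        rw [abs_eq_zero]
        refine hsupp j y fun hyj => ?_
        exact (hdis j m hjm).le_bot ⟨hyj, hym⟩
      rw [this, abs_le]
      have := hf01 m y
      exact ⟨by linarith [this.1], this.2⟩
    · have : ∑ i ∈ t, |f i y| = 0 := by
        refine Finset.sum_eq_zero fun i hi => ?_
        rw [abs_eq_zero]
        exact hsupp i y fun hyi => hex ⟨i, hi, hyi⟩
      rw [this]; exact zero_le_one
  have hweak : WeaklyNull f := by
    intro φ
    set ε : ℕ → ℝ := fun i => if φ (f i) < 0 then -1 else 1 with hε
    have hεabs : ∀ i, |ε i| = 1 := by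
      intro i; by_cases h : φ (f i) < 0 <;> simp [hε, h]
    have hεmul : ∀ i, ε i * φ (f i) = |φ (f i)| := by
      intro i
      by_cases h : φ (f i) < 0
      · simp [hε, h, abs_of_neg h]
      · simp [hε, h, abs_of_nonneg (not_lt.mp h)]
    have hbound : ∀ N : ℕ, ∑ i ∈ Finset.range N, |φ (f i)| ≤ ‖φ‖ := by
      intro N
      set g : C(K, ℝ) := ∑ i ∈ Finset.range N, ε i • f i with hg
      have hgnorm : ‖g‖ ≤ 1 := by
        rw [ContinuousMap.norm_le _ zero_le_one]
        intro y
        have hgy : g y = ∑ i ∈ Finset.range N, ε i * f i y := by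
          simp [hg]
        rw [Real.norm_eq_abs, hgy]
        calc |∑ i ∈ Finset.range N, ε i * f i y|
            ≤ ∑ i ∈ Finset.range N, |ε i * f i y| := Finset.abs_sum_le_sum_abs _ _
          _ = ∑ i ∈ Finset.range N, |f i y| := by
              refine Finset.sum_congr rfl fun i _ => ?_
              rw [abs_mul, hεabs i, one_mul]
          _ ≤ 1 := hptsum _ y
      have hφg : φ g = ∑ i ∈ Finset.range N, |φ (f i)| := by
        rw [hg, map_sum]
        refine Finset.sum_congr rfl fun i _ => ?_
        rw [map_smul, smul_eq_mul, hεmul i]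
      calc ∑ i ∈ Finset.range N, |φ (f i)| = φ g := hφg.symm
        _ ≤ |φ g| := le_abs_self _
        _ ≤ ‖φ‖ * ‖g‖ := φ.le_opNorm g
        _ ≤ ‖φ‖ * 1 := mul_le_mul_of_nonneg_left hgnorm (norm_nonneg φ)
        _ = ‖φ‖ := mul_one _
    have hsum : Summable fun n => |φ (f n)| :=
      summable_of_sum_range_le (fun n => abs_nonneg _) hbound
    have habs : Tendsto (fun n => ‖φ (f n)‖) atTop (𝓝 0) := by
      simpa [Real.norm_eq_abs] using hsum.tendsto_atTop_zero
    exact tendsto_zero_iff_norm_tendsto_zero.mpr habs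
  set ξ : ℕ → (C(K, ℝ) →L[ℝ] ℝ) := fun n => ContinuousMap.evalCLM ℝ (x n) with hξ
  have hξnorm : ∀ n, ‖ξ n‖ ≤ 1 := by
    intro n
    refine ContinuousLinearMap.opNorm_le_bound _ zero_le_one fun g => ?_
    rw [one_mul]
    exact g.norm_coe_le_norm (x n)
  have hξf : ∀ n, ξ n (f n) = 1 := fun n => by
    simp [hξ, ContinuousMap.evalCLM, hfx n]
  refine ⟨?_, f, ξ, hfnorm, hξnorm, hweak, hξf⟩
  intro hschur
  have h0 := hschur f hweak
  have h1 : ∀ n, (1 : ℝ) ≤ ‖f n‖ := by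
    intro n
    calc (1 : ℝ) = |f n (x n)| := by rw [hfx n, abs_one]
      _ ≤ ‖f n‖ := (f n).norm_coe_le_norm (x n)
  have : (1 : ℝ) ≤ 0 := ge_of_tendsto h0 (Filter.Eventually.of_forall h1)
  linarith
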